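/- Let d ≥ 3, and let Ω : (0,∞)² → ℝ be measurable with 0 < Ω(r,z) and Ω(r,z) ≥ M'^{−1} r^{−(d−1)/(dμ)} z^{−1/(dμ)} for all 2 < z < r < 2z, where M' > 1 and μ ∈ (1/d, 1/(d−2)). Define, for X ∈ ℝ^{d+4} written as X = (x,y) ∈ ℝ^{d+1} × ℝ³, Ψ₀(X) := β_d ∫_{ℝ^{d+4}} |X−Y|^{−d−2} |ξ|^{d−3} |η|^{−1} Ω(|ξ|,|η|) dY with Y = (ξ,η), β_d > 0. Then there is C > 1 depending only on d, M' (not on μ) such that Ψ₀(X) ≥ (C(1−(d−2)μ))^{−1} ⟨X⟩^{d−2−1/μ} for all X ∈ ℝ^{d+4}, where ⟨X⟩ = (1+|X|²)^{1/2}. -/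

import Mathlib

open MeasureTheory

open Set Metric

lemma bracket_facts (x y : ℝ) (hx : 0 ≤ x) (hy : 0 ≤ y) :
    1 ≤ Real.sqrt (1 + x ^ 2 + y ^ 2) ∧ x ≤ Real.sqrt (1 + x ^ 2 + y ^ 2) ∧
      y ≤ Real.sqrt (1 + x ^ 2 + y ^ 2) := by
  have hnn : 0 ≤ Real.sqrt (1 + x ^ 2 + y ^ 2) := Real.sqrt_nonneg _
  have hsq : Real.sqrt (1 + x ^ 2 + y ^ 2) ^ 2 = 1 + x ^ 2 + y ^ 2 :=
    Real.sq_sqrt (by positivity)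
  refine ⟨?_, ?_, ?_⟩
  · nlinarith [sq_nonneg (Real.sqrt (1 + x ^ 2 + y ^ 2) - 1)]
  · nlinarith [sq_nonneg (Real.sqrt (1 + x ^ 2 + y ^ 2) - x)]
  · nlinarith [sq_nonneg (Real.sqrt (1 + x ^ 2 + y ^ 2) - y)]

lemma sq_sum_le {a b z : ℝ} (ha : 0 ≤ a) (hb : 0 ≤ b) (h1 : a ≤ 5/2 * z) (h2 : b ≤ 3/2 * z)
    (hz : 0 ≤ z) : a ^ 2 + b ^ 2 ≤ (4 * z) ^ 2 := by
  nlinarith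

lemma two_rpow_neg_two : (2:ℝ) ^ (-2:ℝ) = 4⁻¹ := by
  rw [show (-2:ℝ) = ((-2:ℤ):ℝ) by norm_num, Real.rpow_intCast]
  norm_num

lemma aux_rpow_annulus {z r e : ℝ} (hz : 0 < z) (hzr : z ≤ r) (hr2 : r ≤ 2*z) (he : -2 ≤ e) :
    4⁻¹ * z ^ e ≤ r ^ e := by
  rcases le_or_gt 0 e with h | h
  · have h1 : z ^ e ≤ r ^ e := Real.rpow_le_rpow hz.le hzr h
    nlinarith [Real.rpow_nonneg hz.le e]
  · have h2z : (2*z) ^ e ≤ r ^ e := Real.rpow_le_rpow_of_nonpos (hz.trans_le hzr) hr2 h.le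
    have hmul : (2*z) ^ e = 2 ^ e * z ^ e := Real.mul_rpow (by norm_num) hz.le
    have h4 : (4:ℝ)⁻¹ ≤ 2 ^ e := by
      rw [← two_rpow_neg_two]
      exact Real.rpow_le_rpow_of_exponent_le (by norm_num) he
    nlinarith [Real.rpow_nonneg hz.le e]

lemma pointwise_est (d : ℕ) (hd3 : 3 ≤ (d:ℝ)) (M' μ : ℝ) (hM' : 1 < M')
    (hμpos : 0 < μ) (hμd : 1 < μ * d)
    (Ω : ℝ → ℝ → ℝ)
    (hΩlow : ∀ r z : ℝ, 2 < z → z < r → r < 2 * z →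
      M'⁻¹ * r ^ (-(((d:ℝ) - 1) / ((d:ℝ) * μ))) * z ^ (-(1 / ((d:ℝ) * μ))) ≤ Ω r z)
    (s r z : ℝ) (hz : 2 < z) (hr1 : z < r) (hr2 : r < 2*z) (hs0 : 0 < s) (hs : s ≤ 4*z) :
    4 ^ (-(d:ℝ)-2) * M'⁻¹ * 4⁻¹ * z ^ (-6 - 1/μ)
      ≤ s ^ (-(d:ℝ)-2) * (r ^ ((d:ℝ)-3) * z⁻¹ * Ω r z) := by
  have hz0 : (0:ℝ) < z := by linarith
  have hr0 : (0:ℝ) < r := by linarith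
  have hd0 : (0:ℝ) < d := by linarith
  have hdμ : (0:ℝ) < d * μ := by positivity
  have hM0 : (0:ℝ) < M'⁻¹ := by positivity
  set e : ℝ := (d:ℝ) - 3 + -(((d:ℝ) - 1) / ((d:ℝ) * μ)) with hedef
  -- e ≥ -2
  have hefrac : ((d:ℝ) - 1) / ((d:ℝ) * μ) ≤ (d:ℝ) - 1 := by
    rw [div_le_iff₀ hdμ]
    nlinarith
  have he2 : -2 ≤ e := by rw [hedef]; nlinarith
  -- step 1 : s^{-d-2} ≥ (4z)^{-d-2}
  have h1 : (4*z) ^ (-(d:ℝ)-2) ≤ s ^ (-(d:ℝ)-2) :=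
    Real.rpow_le_rpow_of_nonpos hs0 hs (by linarith)
  -- step 2 : Ω lower bound
  have hΩ := hΩlow r z hz hr1 hr2
  -- B' ≤ B
  have hB' : M'⁻¹ * r ^ e * z ^ (-1 + -(1 / ((d:ℝ) * μ)))
      ≤ r ^ ((d:ℝ)-3) * z⁻¹ * Ω r z := by
    have h01 : r ^ ((d:ℝ)-3) * z⁻¹ * (M'⁻¹ * r ^ (-(((d:ℝ) - 1) / ((d:ℝ) * μ))) *
        z ^ (-(1 / ((d:ℝ) * μ)))) = M'⁻¹ * r ^ e * z ^ (-1 + -(1 / ((d:ℝ) * μ))) := by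
      rw [hedef, Real.rpow_add hr0, Real.rpow_add hz0, ← Real.rpow_neg_one z]
      ring
    rw [← h01]
    gcongr
  -- bound r^e from below
  have h2 : 4⁻¹ * z ^ e ≤ r ^ e := aux_rpow_annulus hz0 hr1.le hr2.le he2
  -- combine
  have hBnn : 0 ≤ r ^ ((d:ℝ)-3) * z⁻¹ * Ω r z := by
    have : (0:ℝ) ≤ M'⁻¹ * r ^ e * z ^ (-1 + -(1 / ((d:ℝ) * μ))) := by positivity
    linarith
  calc 4 ^ (-(d:ℝ)-2) * M'⁻¹ * 4⁻¹ * z ^ (-6 - 1/μ)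
      = (4*z) ^ (-(d:ℝ)-2) * (M'⁻¹ * (4⁻¹ * z ^ e) * z ^ (-1 + -(1 / ((d:ℝ) * μ)))) := by
        rw [Real.mul_rpow (by norm_num) hz0.le]
        rw [show (-6 - 1/μ : ℝ) = (-(d:ℝ)-2) + (e + (-1 + -(1 / ((d:ℝ) * μ)))) by
          rw [hedef]; field_simp; ring]
        rw [Real.rpow_add hz0, Real.rpow_add hz0]
        ring
    _ ≤ (4*z) ^ (-(d:ℝ)-2) * (M'⁻¹ * r ^ e * z ^ (-1 + -(1 / ((d:ℝ) * μ)))) := by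
        gcongr
    _ ≤ (4*z) ^ (-(d:ℝ)-2) * (r ^ ((d:ℝ)-3) * z⁻¹ * Ω r z) := by
        gcongr
    _ ≤ s ^ (-(d:ℝ)-2) * (r ^ ((d:ℝ)-3) * z⁻¹ * Ω r z) := by
        exact mul_le_mul_of_nonneg_right h1 hBnn

local notation "E₂" => EuclideanSpace ℝ (Fin 3)

lemma radial3_lower (c p R : ℝ) (hc : 0 ≤ c) (hp : p < -3) (hR : 1 ≤ R) :
    ENNReal.ofReal (3 * (volume (ball (0 : E₂) 1)).toReal * (c * (-R ^ (p + 3) / (p + 3))))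
      ≤ ∫⁻ η : E₂, Set.indicator {z : E₂ | R < ‖z‖}
          (fun z => ENNReal.ofReal (c * ‖z‖ ^ p)) η := by
  have hR0 : (0:ℝ) < R := by linarith
  set g : ℝ → ℝ := Set.indicator (Ioi R) (fun r => c * r ^ p) with hgdef
  -- pointwise identification
  have hpt : ∀ η : E₂, Set.indicator {z : E₂ | R < ‖z‖}
      (fun z => ENNReal.ofReal (c * ‖z‖ ^ p)) η = ENNReal.ofReal (g ‖η‖) := by
    intro η
    by_cases h : R < ‖η‖
    · rw [Set.indicator_of_mem (show η ∈ {z : E₂ | R < ‖z‖} from h), hgdef,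
        Set.indicator_of_mem (mem_Ioi.mpr h)]
    · rw [Set.indicator_of_notMem (show η ∉ {z : E₂ | R < ‖z‖} from h), hgdef,
        Set.indicator_of_notMem (fun hx => h (mem_Ioi.mp hx)), ENNReal.ofReal_zero]
  -- measurability of g ∘ norm
  have hmeas : Measurable fun η : E₂ => g ‖η‖ := by
    have : Measurable g := by
      apply Measurable.indicator _ measurableSet_Ioi
      fun_prop
    exact this.comp measurable_norm
  -- integrability
  have hint : Integrable (fun η : E₂ => g ‖η‖) := by
    have hbig : Integrable (fun η : E₂ => c * 2 ^ (-p) * (1 + ‖η‖) ^ (-(-p))) :=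
      (integrable_one_add_norm (by
        rw [finrank_euclideanSpace_fin]; push_cast; linarith)).const_mul _
    apply hbig.mono hmeas.aestronglyMeasurable
    filter_upwards with η
    rw [Real.norm_eq_abs, Real.norm_eq_abs, neg_neg]
    have hnn : 0 ≤ (1 + ‖η‖) ^ p := Real.rpow_nonneg (by positivity) _
    have h2 : 0 ≤ c * 2 ^ (-p) * (1 + ‖η‖) ^ p := by positivity
    rw [abs_of_nonneg h2]
    by_cases h : R < ‖η‖
    · rw [hgdef, Set.indicator_of_mem (mem_Ioi.mpr h), abs_of_nonneg (by positivity)]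
      have h1η : 1 ≤ ‖η‖ := le_trans hR h.le
      have key : ‖η‖ ^ p ≤ 2 ^ (-p) * (1 + ‖η‖) ^ p := by
        have hle : 1 + ‖η‖ ≤ 2 * ‖η‖ := by linarith
        have : (2 * ‖η‖) ^ p ≤ (1 + ‖η‖) ^ p :=
          Real.rpow_le_rpow_of_nonpos (by positivity) hle (by linarith)
        have hmul : (2 * ‖η‖) ^ p = 2 ^ p * ‖η‖ ^ p := Real.mul_rpow (by norm_num) (by positivity)
        have h2p : (0:ℝ) < 2 ^ p := Real.rpow_pos_of_pos (by norm_num) _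
        have h2np : (2:ℝ) ^ (-p) = ((2:ℝ) ^ p)⁻¹ := Real.rpow_neg (by norm_num) p
        rw [h2np, inv_mul_eq_div, le_div_iff₀ h2p, mul_comm]
        rw [← hmul]
        exact this
      calc c * ‖η‖ ^ p ≤ c * (2 ^ (-p) * (1 + ‖η‖) ^ p) := by
            apply mul_le_mul_of_nonneg_left key hc
        _ = c * 2 ^ (-p) * (1 + ‖η‖) ^ p := by ring
    · rw [hgdef, Set.indicator_of_notMem (fun hx => h (mem_Ioi.mp hx)), abs_zero]
      exact h2
  -- nonneg
  have hnn : 0 ≤ᵐ[volume] fun η : E₂ => g ‖η‖ := by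
    filter_upwards with η
    rw [hgdef]
    apply Set.indicator_nonneg
    intro x hx
    have : (0:ℝ) < x := lt_trans hR0 hx
    positivity
  -- value of the integral
  have hval : ∫ η : E₂, g ‖η‖ =
      3 * (volume (ball (0 : E₂) 1)).toReal * (c * (-R ^ (p + 3) / (p + 3))) := by
    rw [integral_fun_norm_addHaar volume g, finrank_euclideanSpace_fin]
    have hsmul : ∀ y : ℝ, y ∈ Ioi (0:ℝ) →
        y ^ (3 - 1) • g y = Set.indicator (Ioi R) (fun r => c * r ^ (p + 2)) y := by
      intro y hy
      by_cases h : R < y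
      · rw [hgdef, Set.indicator_of_mem (mem_Ioi.mpr h), Set.indicator_of_mem (mem_Ioi.mpr h),
          smul_eq_mul]
        rw [Real.rpow_add (mem_Ioi.mp hy), show ((3:ℕ) - 1) = 2 from rfl]
        rw [show (y:ℝ) ^ (2:ℕ) = y ^ ((2:ℕ):ℝ) from (Real.rpow_natCast y 2).symm]
        push_cast
        ring
      · rw [hgdef, Set.indicator_of_notMem (fun hx => h (mem_Ioi.mp hx)),
          Set.indicator_of_notMem (fun hx => h (mem_Ioi.mp hx)), smul_zero]
    rw [setIntegral_congr_fun measurableSet_Ioi hsmul,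
      setIntegral_indicator measurableSet_Ioi,
      Set.Ioi_inter_Ioi, max_eq_right hR0.le, integral_const_mul,
      integral_Ioi_rpow_of_lt (by linarith) hR0]
    rw [smul_eq_mul, nsmul_eq_mul, show p + 2 + 1 = p + 3 by ring]
    push_cast
    simp only [measureReal_def]
    ring
  have heq : (∫⁻ η : E₂, Set.indicator {z : E₂ | R < ‖z‖}
      (fun z => ENNReal.ofReal (c * ‖z‖ ^ p)) η)
      = ENNReal.ofReal (3 * (volume (ball (0 : E₂) 1)).toReal * (c * (-R ^ (p + 3) / (p + 3)))) := by
    rw [lintegral_congr hpt, ← ofReal_integral_eq_lintegral_ofReal hint hnn, hval]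
  exact heq.ge

section Main
set_option maxHeartbeats 1000000

local notation "Esp" d => EuclideanSpace ℝ (Fin (d + 1))

/-- Lower bound for the Newtonian potential `Ψ₀` associated with the density
`|ξ|^{d-3}|η|^{-1} Ω(|ξ|,|η|)` in `ℝ^{d+4} = ℝ^{d+1} × ℝ³`, using only the lower
bound for `Ω` in the core region `2 < z < r < 2z`.  The potential is formulated as a
Lebesgue (lower) integral, and `|X - Y|` is the Euclidean norm
`√(‖x-ξ‖² + ‖y-η‖²)`. -/
theorem newtonian_potential_lower_bound (d : ℕ) (hd : 3 ≤ d) (M' : ℝ) (hM' : 1 < M')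
    (βd : ℝ) (hβd : 0 < βd) :
    ∃ C : ℝ, 1 < C ∧ ∀ μ : ℝ, 1 / (d:ℝ) < μ → μ < 1 / ((d:ℝ) - 2) →
      ∀ Ω : ℝ → ℝ → ℝ, Measurable (fun p : ℝ × ℝ => Ω p.1 p.2) →
        (∀ r z : ℝ, 0 < r → 0 < z → 0 < Ω r z) →
        (∀ r z : ℝ, 2 < z → z < r → r < 2 * z →
          M'⁻¹ * r ^ (-(((d:ℝ) - 1) / ((d:ℝ) * μ))) * z ^ (-(1 / ((d:ℝ) * μ))) ≤ Ω r z) →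
        ∀ X : EuclideanSpace ℝ (Fin (d + 1)) × EuclideanSpace ℝ (Fin 3),
          ENNReal.ofReal ((C * (1 - ((d:ℝ) - 2) * μ))⁻¹ *
              Real.sqrt (1 + ‖X.1‖ ^ 2 + ‖X.2‖ ^ 2) ^ ((d:ℝ) - 2 - 1 / μ))
            ≤ ENNReal.ofReal βd *
              ∫⁻ Y : EuclideanSpace ℝ (Fin (d + 1)) × EuclideanSpace ℝ (Fin 3),
                ENNReal.ofReal
                  (Real.sqrt (‖X.1 - Y.1‖ ^ 2 + ‖X.2 - Y.2‖ ^ 2) ^ (-(d:ℝ) - 2) *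
                    (‖Y.1‖ ^ ((d:ℝ) - 3) * ‖Y.2‖⁻¹ * Ω ‖Y.1‖ ‖Y.2‖)) := by
  classical
  have hd3 : (3:ℝ) ≤ (d:ℝ) := by exact_mod_cast hd
  have hd0 : (0:ℝ) < (d:ℝ) := by linarith
  have hM'0 : (0:ℝ) < M' := by linarith
  -- volumes of unit balls
  set V1 : ENNReal := volume (ball (0 : Esp d) 1) with hV1def
  set V3r : ℝ := (volume (ball (0 : E₂) 1)).toReal with hV3rdef
  have hV1top : V1 ≠ ⊤ := measure_ball_lt_top.ne
  have hV1pos : 0 < V1 := measure_ball_pos _ _ one_pos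
  set V1r : ℝ := V1.toReal with hV1rdef
  have hV1r : 0 < V1r := ENNReal.toReal_pos hV1pos.ne' hV1top
  have hV3r : 0 < V3r := ENNReal.toReal_pos (measure_ball_pos _ _ one_pos).ne'
    measure_ball_lt_top.ne
  -- constants
  set K : ℝ := 4 ^ (-(d:ℝ)-2) * M'⁻¹ * 4⁻¹ with hKdef
  have hK : 0 < K := by
    have : (0:ℝ) < (4:ℝ) ^ (-(d:ℝ)-2) := Real.rpow_pos_of_pos (by norm_num) _
    positivity
  set K2 : ℝ := K / 2 ^ (d+1) with hK2def
  have hK2 : 0 < K2 := by positivity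
  set c₁ : ℝ := βd * (3 * V3r * (K2 * V1r)) / (4 * d) with hc₁def
  have hc₁ : 0 < c₁ := by positivity
  have hC1 : 1 < 2 + c₁⁻¹ := by
    have h8 := inv_pos.mpr hc₁
    linarith
  refine ⟨2 + c₁⁻¹, hC1, ?_⟩
  intro μ hμ1 hμ2 Ω hΩm hΩpos hΩlow X
  -- basic facts about μ
  have hμpos : 0 < μ := lt_trans (by positivity) hμ1
  have hμd : 1 < μ * d := by
    rw [div_lt_iff₀ hd0] at hμ1; linarith
  have hμd2 : μ * ((d:ℝ) - 2) < 1 := by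
    rw [lt_div_iff₀ (by linarith : (0:ℝ) < (d:ℝ)-2)] at hμ2; linarith
  have h1μd : 1 / μ < (d:ℝ) := by
    rw [div_lt_iff₀ hμpos]; linarith
  have h1μd2 : (d:ℝ) - 2 < 1 / μ := by
    rw [lt_div_iff₀ hμpos]; linarith
  set s₀ : ℝ := 1 - ((d:ℝ) - 2) * μ with hs₀def
  have hs₀ : 0 < s₀ := by rw [hs₀def]; linarith
  -- the point X
  set A : ℝ := Real.sqrt (1 + ‖X.1‖ ^ 2 + ‖X.2‖ ^ 2) with hAdef
  obtain ⟨hA1, hX1, hX2⟩ := bracket_facts ‖X.1‖ ‖X.2‖ (norm_nonneg _) (norm_nonneg _)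
  rw [← hAdef] at hA1 hX1 hX2
  have hA0 : 0 < A := by linarith
  -- exponents
  set q : ℝ := -6 - 1/μ with hqdef
  set p : ℝ := (d:ℝ) - 5 - 1/μ with hpdef
  set t : ℝ := (d:ℝ) - 2 - 1/μ with htdef
  have hp3t : p + 3 = t := by rw [hpdef, htdef]; ring
  have hpm3 : p < -3 := by rw [hpdef]; linarith
  have htneg : t < 0 := by rw [htdef]; linarith
  have htm2 : -2 ≤ t := by rw [htdef]; linarith
  -- geometric sets
  set e : Esp d := EuclideanSpace.single (0 : Fin (d+1)) (1:ℝ) with hedef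
  have hnorme : ‖e‖ = 1 := by rw [hedef, EuclideanSpace.norm_single]; norm_num
  set S1 : Set E₂ := {z : E₂ | 2*A < ‖z‖} with hS1def
  set T : Set ((Esp d) × E₂) := {Y : (Esp d) × E₂ |
    ‖Y.1 - (3 * ‖Y.2‖ / 2) • e‖ < ‖Y.2‖ / 2} with hTdef
  have hS1m : MeasurableSet S1 := measurableSet_lt measurable_const measurable_norm
  have hcontT : Continuous fun Y : (Esp d) × E₂ => ‖Y.1 - (3 * ‖Y.2‖ / 2) • e‖ := by
    fun_prop
  have hTm : MeasurableSet T :=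
    measurableSet_lt hcontT.measurable (by fun_prop)
  -- the minorant
  set f : (Esp d) × E₂ → ENNReal := fun Y =>
    S1.indicator (fun z => ENNReal.ofReal (K * ‖z‖ ^ q)) Y.2 * T.indicator 1 Y with hfdef
  have hindm : Measurable (S1.indicator (fun z : E₂ => ENNReal.ofReal (K * ‖z‖ ^ q))) := by
    apply Measurable.indicator _ hS1m
    fun_prop
  have hfm : Measurable f := by
    apply Measurable.mul (hindm.comp measurable_snd)
    exact measurable_const.indicator hTm
  -- pointwise bound
  have hpt : ∀ Y : (Esp d) × E₂, f Y ≤ ENNReal.ofReal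
      (Real.sqrt (‖X.1 - Y.1‖ ^ 2 + ‖X.2 - Y.2‖ ^ 2) ^ (-(d:ℝ) - 2) *
        (‖Y.1‖ ^ ((d:ℝ) - 3) * ‖Y.2‖⁻¹ * Ω ‖Y.1‖ ‖Y.2‖)) := by
    intro Y
    simp only [hfdef]
    by_cases h1 : Y.2 ∈ S1
    · by_cases h2 : Y ∈ T
      · rw [Set.indicator_of_mem h1, Set.indicator_of_mem h2, Pi.one_apply, mul_one]
        apply ENNReal.ofReal_le_ofReal
        have hz2A : 2 * A < ‖Y.2‖ := h1
        have hz2 : 2 < ‖Y.2‖ := by linarith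
        have hz0 : (0:ℝ) < ‖Y.2‖ := by linarith
        have hball : ‖Y.1 - (3 * ‖Y.2‖ / 2) • e‖ < ‖Y.2‖ / 2 := h2
        have hce : ‖(3 * ‖Y.2‖ / 2) • e‖ = 3 * ‖Y.2‖ / 2 := by
          rw [norm_smul, hnorme, mul_one, Real.norm_eq_abs, abs_of_nonneg (by positivity)]
        have hr1 : ‖Y.2‖ < ‖Y.1‖ := by
          have h3 := norm_sub_norm_le ((3 * ‖Y.2‖ / 2) • e) Y.1
          rw [norm_sub_rev, hce] at h3
          linarith
        have hr2 : ‖Y.1‖ < 2 * ‖Y.2‖ := by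
          have h4 : ‖Y.1‖ ≤ ‖Y.1 - (3 * ‖Y.2‖ / 2) • e‖ + ‖(3 * ‖Y.2‖ / 2) • e‖ := by
            calc ‖Y.1‖ = ‖Y.1 - (3 * ‖Y.2‖ / 2) • e + (3 * ‖Y.2‖ / 2) • e‖ := by
                  rw [sub_add_cancel]
              _ ≤ _ := norm_add_le _ _
          rw [hce] at h4
          linarith
        have hy2 : ‖Y.2‖ - ‖X.2‖ ≤ ‖X.2 - Y.2‖ := by
          have h5 := norm_sub_norm_le Y.2 X.2
          rwa [norm_sub_rev] at h5
        have hs2pos : 0 < ‖X.2 - Y.2‖ := by linarith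
        have hs0 : 0 < Real.sqrt (‖X.1 - Y.1‖ ^ 2 + ‖X.2 - Y.2‖ ^ 2) := by
          apply Real.sqrt_pos.mpr
          have h9 : 0 < ‖X.2 - Y.2‖ ^ 2 := pow_pos hs2pos 2
          have h10 : 0 ≤ ‖X.1 - Y.1‖ ^ 2 := sq_nonneg _
          linarith
        have hsumle : ‖X.1 - Y.1‖ ^ 2 + ‖X.2 - Y.2‖ ^ 2 ≤ (4 * ‖Y.2‖) ^ 2 := by
          have u1 := norm_sub_le X.1 Y.1
          have u2 := norm_sub_le X.2 Y.2
          have n1 := norm_nonneg (X.1 - Y.1)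
          have n2 := norm_nonneg (X.2 - Y.2)
          have b1 : ‖X.1 - Y.1‖ ≤ 5/2 * ‖Y.2‖ := by linarith
          have b2 : ‖X.2 - Y.2‖ ≤ 3/2 * ‖Y.2‖ := by linarith
          exact sq_sum_le n1 n2 b1 b2 (by linarith)
        have hs4 : Real.sqrt (‖X.1 - Y.1‖ ^ 2 + ‖X.2 - Y.2‖ ^ 2) ≤ 4 * ‖Y.2‖ := by
          have h6 := Real.sqrt_le_sqrt hsumle
          rwa [Real.sqrt_sq (by positivity)] at h6
        have h7 := pointwise_est d hd3 M' μ hM' hμpos hμd Ω hΩlow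
          (Real.sqrt (‖X.1 - Y.1‖ ^ 2 + ‖X.2 - Y.2‖ ^ 2)) ‖Y.1‖ ‖Y.2‖ hz2 hr1 hr2 hs0 hs4
        rw [hKdef, hqdef]
        exact h7
      · rw [Set.indicator_of_notMem h2, mul_zero]
        exact zero_le
    · rw [Set.indicator_of_notMem h1, zero_mul]
      exact zero_le
  -- Tonelli computation for the minorant
  have hindm2 : Measurable (S1.indicator (fun z : E₂ => ENNReal.ofReal (K2 * ‖z‖ ^ p))) := by
    apply Measurable.indicator _ hS1m
    fun_prop
  have hTon : (∫⁻ Y : (Esp d) × E₂, f Y) =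
      (∫⁻ η : E₂, S1.indicator (fun z : E₂ => ENNReal.ofReal (K2 * ‖z‖ ^ p)) η) * V1 := by
    rw [Measure.volume_eq_prod, lintegral_prod_symm f hfm.aemeasurable]
    have hinner : ∀ η : E₂, (∫⁻ ξ : Esp d, f (ξ, η)) =
        S1.indicator (fun z : E₂ => ENNReal.ofReal (K2 * ‖z‖ ^ p)) η * V1 := by
      intro η
      have hf1 : ∀ ξ : Esp d, f (ξ, η) =
          S1.indicator (fun z : E₂ => ENNReal.ofReal (K * ‖z‖ ^ q)) η *
            (ball ((3 * ‖η‖ / 2) • e) (‖η‖ / 2)).indicator (1 : (Esp d) → ENNReal) ξ := by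
        intro ξ
        simp only [hfdef]
        try congr 1
        try {
          by_cases h : ‖ξ - (3 * ‖η‖ / 2) • e‖ < ‖η‖ / 2
          · rw [Set.indicator_of_mem (show (ξ, η) ∈ T from h),
              Set.indicator_of_mem (mem_ball_iff_norm.mpr h)]
          · rw [Set.indicator_of_notMem (show (ξ, η) ∉ T from h),
              Set.indicator_of_notMem (fun hx => h (mem_ball_iff_norm.mp hx))] }
      rw [lintegral_congr hf1,
        lintegral_const_mul _ (measurable_one.indicator measurableSet_ball),
        lintegral_indicator_one measurableSet_ball,
        Measure.addHaar_ball volume _ (by positivity : (0:ℝ) ≤ ‖η‖ / 2),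
        finrank_euclideanSpace_fin]
      by_cases h : η ∈ S1
      · rw [Set.indicator_of_mem h, Set.indicator_of_mem h]
        have hz2A : 2 * A < ‖η‖ := h
        have hz0 : (0:ℝ) < ‖η‖ := by linarith
        rw [← mul_assoc, ← ENNReal.ofReal_mul (by positivity)]
        congr 2
        have hpow : ‖η‖ ^ q * ‖η‖ ^ ((d + 1 : ℕ) : ℝ) = ‖η‖ ^ p := by
          rw [← Real.rpow_add hz0]
          congr 1
          rw [hqdef, hpdef]
          push_cast
          ring
        rw [div_pow, ← Real.rpow_natCast ‖η‖ (d + 1), hK2def,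
          show K * ‖η‖ ^ q * (‖η‖ ^ ((d + 1 : ℕ) : ℝ) / 2 ^ (d + 1)) =
            K / 2 ^ (d + 1) * (‖η‖ ^ q * ‖η‖ ^ ((d + 1 : ℕ) : ℝ)) by ring, hpow]
      · rw [Set.indicator_of_notMem h, Set.indicator_of_notMem h, zero_mul, zero_mul]
    rw [lintegral_congr hinner, lintegral_mul_const _ hindm2]
  -- lower bound for the η-integral
  have hrad := radial3_lower K2 p (2 * A) hK2.le hpm3 (by linarith)
  rw [← hS1def] at hrad
  -- collect: lower bound for the full lintegral of f
  have hWnn : 0 ≤ 3 * V3r * (K2 * (-(2 * A) ^ (p + 3) / (p + 3))) := by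
    have h2A : (0:ℝ) < (2 * A) ^ (p + 3) := Real.rpow_pos_of_pos (by linarith) _
    have hp30 : p + 3 < 0 := by linarith
    have h11 : 0 ≤ -(2 * A) ^ (p + 3) / (p + 3) := by
      rw [show -(2 * A) ^ (p + 3) / (p + 3) = (2 * A) ^ (p + 3) / (-(p + 3)) by
        rw [div_neg, neg_div]]
      exact div_nonneg h2A.le (by linarith)
    positivity
  have hflow : ENNReal.ofReal (3 * V3r * (K2 * (-(2 * A) ^ (p + 3) / (p + 3))) * V1r)
      ≤ ∫⁻ Y : (Esp d) × E₂, f Y := by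
    rw [hTon, ENNReal.ofReal_mul hWnn, hV1rdef, ENNReal.ofReal_toReal hV1top]
    exact mul_le_mul_left hrad V1
  -- final real-number comparison
  have hreal : ((2 + c₁⁻¹) * (1 - ((d:ℝ) - 2) * μ))⁻¹ * A ^ t
      ≤ βd * (3 * V3r * (K2 * (-(2 * A) ^ (p + 3) / (p + 3))) * V1r) := by
    have h2t : (4:ℝ)⁻¹ ≤ 2 ^ t := by
      rw [← two_rpow_neg_two]
      exact Real.rpow_le_rpow_of_exponent_le (by norm_num) htm2
    have hAt : (0:ℝ) < A ^ t := Real.rpow_pos_of_pos hA0 _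
    have hsplit : (2 * A) ^ t = 2 ^ t * A ^ t := Real.mul_rpow (by norm_num) hA0.le
    have hvalue : -(2 * A) ^ (p + 3) / (p + 3) = (2 ^ t * A ^ t) * (μ / s₀) := by
      rw [hp3t, hsplit]
      have hts : t = -s₀ / μ := by
        rw [htdef, hs₀def]
        field_simp
        ring
      rw [hts]
      field_simp
    rw [hvalue]
    have hC : (2 + c₁⁻¹)⁻¹ ≤ c₁ := by
      have h12 : c₁⁻¹ ≤ 2 + c₁⁻¹ := by linarith
      calc (2 + c₁⁻¹)⁻¹ ≤ (c₁⁻¹)⁻¹ := inv_anti₀ (inv_pos.mpr hc₁) h12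
        _ = c₁ := inv_inv c₁
    have hchain : βd * (3 * V3r * (K2 * (2 ^ t * A ^ t * (μ / s₀)))) * V1r
        ≥ βd * (3 * V3r * (K2 * (4⁻¹ * A ^ t * ((1 / (d:ℝ)) / s₀)))) * V1r := by
      gcongr
      try exact le_of_lt hμ1
    have heq2 : βd * (3 * V3r * (K2 * (4⁻¹ * A ^ t * ((1 / (d:ℝ)) / s₀)))) * V1r
        = c₁ * (A ^ t / s₀) := by
      rw [hc₁def]
      field_simp
    have hlhs : ((2 + c₁⁻¹) * s₀)⁻¹ * A ^ t = (2 + c₁⁻¹)⁻¹ * (A ^ t / s₀) := by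
      rw [mul_inv]
      ring
    rw [show (1 - ((d:ℝ) - 2) * μ) = s₀ from rfl, hlhs]
    calc (2 + c₁⁻¹)⁻¹ * (A ^ t / s₀) ≤ c₁ * (A ^ t / s₀) := by
          apply mul_le_mul_of_nonneg_right hC
          positivity
      _ = βd * (3 * V3r * (K2 * (4⁻¹ * A ^ t * ((1 / (d:ℝ)) / s₀)))) * V1r := heq2.symm
      _ ≤ βd * (3 * V3r * (K2 * (2 ^ t * A ^ t * (μ / s₀)))) * V1r := hchain
      _ = βd * (3 * V3r * (K2 * (2 ^ t * A ^ t * (μ / s₀))) * V1r) := by ring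
  -- assemble in ENNReal
  calc ENNReal.ofReal (((2 + c₁⁻¹) * (1 - ((d:ℝ) - 2) * μ))⁻¹ * A ^ t)
      ≤ ENNReal.ofReal (βd * (3 * V3r * (K2 * (-(2 * A) ^ (p + 3) / (p + 3))) * V1r)) :=
        ENNReal.ofReal_le_ofReal hreal
    _ = ENNReal.ofReal βd *
        ENNReal.ofReal (3 * V3r * (K2 * (-(2 * A) ^ (p + 3) / (p + 3))) * V1r) := by
        rw [← ENNReal.ofReal_mul hβd.le]
    _ ≤ ENNReal.ofReal βd * ∫⁻ Y : (Esp d) × E₂, f Y := mul_le_mul_right hflow _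
    _ ≤ _ := mul_le_mul_right (lintegral_mono hpt) _

end Main
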